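/- Suppose A satisfies the RIP of order K with constant δ_K, and E is a perturbation matrix with ε := ‖E‖₂^{(K)} / ‖A‖₂^{(K)}, where ‖·‖₂^{(K)} denotes the largest spectral norm over all K-column submatrices. Then the matrix à = A + E satisfies the RIP of order K with constant δ̃_K ≤ (1+δ_K)(1+ε)² − 1. -/

import Mathlib

open Matrix Finset

/-- The ℓ₂ norm of a finite real vector. -/
noncomputable def l2 {n : ℕ} (v : Fin n → ℝ) : ℝ := Real.sqrt (∑ i, (v i) ^ 2)

/-- The ℓ₁ norm of a finite real vector. -/
noncomputable def l1 {n : ℕ} (v : Fin n → ℝ) : ℝ := ∑ i, |v i|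

/-- A vector is `K`-sparse if it has at most `K` nonzero entries. -/
def IsSparse {n : ℕ} (K : ℕ) (v : Fin n → ℝ) : Prop :=
  ∃ S : Finset (Fin n), S.card ≤ K ∧ ∀ i ∉ S, v i = 0

/-- `A` satisfies the RIP of order `K` with constant `δ`. -/
def SatisfiesRIP {m n : ℕ} (A : Matrix (Fin m) (Fin n) ℝ) (K : ℕ) (δ : ℝ) : Prop :=
  ∀ v : Fin n → ℝ, IsSparse K v →
    (1 - δ) * (l2 v) ^ 2 ≤ (l2 (A.mulVec v)) ^ 2 ∧
      (l2 (A.mulVec v)) ^ 2 ≤ (1 + δ) * (l2 v) ^ 2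

/-- Spectral norm (ℓ₂ operator norm) of a matrix. -/
noncomputable def specNorm {m n : ℕ} (A : Matrix (Fin m) (Fin n) ℝ) : ℝ :=
  sSup {c | ∃ v : Fin n → ℝ, l2 v ≤ 1 ∧ c = l2 (A.mulVec v)}

/-- The matrix with the columns of `A` indexed by `S` kept and all other columns zeroed,
representing the column-submatrix `A_S`. -/
def colRestrict {m n : ℕ} (A : Matrix (Fin m) (Fin n) ℝ) (S : Finset (Fin n)) :
    Matrix (Fin m) (Fin n) ℝ := fun i j => if j ∈ S then A i j else 0

/-- `‖A‖₂^{(K)}`: the largest spectral norm over all `K`-column submatrices of `A`. -/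
noncomputable def subNorm {m n : ℕ} (A : Matrix (Fin m) (Fin n) ℝ) (K : ℕ) : ℝ :=
  sSup {c | ∃ S : Finset (Fin n), S.card = K ∧ c = specNorm (colRestrict A S)}

/-- The pseudo-inverse `(BᵀB)⁻¹Bᵀ` of a full-column-rank matrix `B`. -/
noncomputable def pinv {m k : ℕ} (B : Matrix (Fin m) (Fin k) ℝ) : Matrix (Fin k) (Fin m) ℝ :=
  (Bᵀ * B)⁻¹ * Bᵀ

/-- `sK` is a best `K`-term (ℓ₂) approximation of `s`. -/
def IsBestApprox {n : ℕ} (K : ℕ) (s sK : Fin n → ℝ) : Prop :=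
  IsSparse K sK ∧ ∀ t : Fin n → ℝ, IsSparse K t → l2 (s - sK) ≤ l2 (s - t)

/-- Embed a vector indexed by `Fin k` into `Fin n` along an injection `f` (zero elsewhere). -/
noncomputable def embedVec {k n : ℕ} (f : Fin k → Fin n) (w : Fin k → ℝ) : Fin n → ℝ :=
  fun j => ∑ i, if f i = j then w i else 0

lemma l2_nonneg {n : ℕ} (v : Fin n → ℝ) : 0 ≤ l2 v := Real.sqrt_nonneg _

lemma l2_eq_norm {n : ℕ} (v : Fin n → ℝ) :
    l2 v = ‖(WithLp.equiv 2 (Fin n → ℝ)).symm v‖ := by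
  rw [EuclideanSpace.norm_eq]
  simp [l2, Real.norm_eq_abs, sq_abs]

lemma l2_add_le {n : ℕ} (v w : Fin n → ℝ) : l2 (v + w) ≤ l2 v + l2 w := by
  rw [l2_eq_norm, l2_eq_norm, l2_eq_norm]
  exact norm_add_le _ _

lemma l2_neg {n : ℕ} (v : Fin n → ℝ) : l2 (-v) = l2 v := by
  simp [l2]

lemma l2_smul {n : ℕ} (c : ℝ) (v : Fin n → ℝ) : l2 (c • v) = |c| * l2 v := by
  simp only [l2, Pi.smul_apply, smul_eq_mul, mul_pow, ← Finset.mul_sum]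
  rw [Real.sqrt_mul (sq_nonneg c), Real.sqrt_sq_eq_abs]

lemma l2_eq_zero {n : ℕ} {v : Fin n → ℝ} (h : l2 v = 0) : v = 0 := by
  have h2 : (∑ i, (v i) ^ 2) = 0 := by
    have := Real.sqrt_eq_zero (by positivity) |>.mp h
    exact this
  funext i
  have := (Finset.sum_eq_zero_iff_of_nonneg (fun i _ => sq_nonneg (v i))).mp h2 i (mem_univ i)
  exact pow_eq_zero_iff (by norm_num) |>.mp this

lemma l2_mulVec_eq {m n : ℕ} (B : Matrix (Fin m) (Fin n) ℝ) (v : Fin n → ℝ) :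
    l2 (B.mulVec v) = ‖Matrix.toEuclideanLin B ((WithLp.equiv 2 (Fin n → ℝ)).symm v)‖ := by
  rw [Matrix.toEuclideanLin_apply, l2_eq_norm]
  simp

lemma specNorm_bddAbove {m n : ℕ} (B : Matrix (Fin m) (Fin n) ℝ) :
    BddAbove {c | ∃ v : Fin n → ℝ, l2 v ≤ 1 ∧ c = l2 (B.mulVec v)} := by
  refine ⟨‖LinearMap.toContinuousLinearMap (Matrix.toEuclideanLin B)‖, ?_⟩
  rintro c ⟨v, hv, rfl⟩
  rw [l2_mulVec_eq]
  calc ‖Matrix.toEuclideanLin B ((WithLp.equiv 2 (Fin n → ℝ)).symm v)‖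
      = ‖LinearMap.toContinuousLinearMap (Matrix.toEuclideanLin B)
          ((WithLp.equiv 2 (Fin n → ℝ)).symm v)‖ := rfl
    _ ≤ ‖LinearMap.toContinuousLinearMap (Matrix.toEuclideanLin B)‖ *
          ‖(WithLp.equiv 2 (Fin n → ℝ)).symm v‖ := ContinuousLinearMap.le_opNorm _ _
    _ ≤ _ := by
        rw [← l2_eq_norm]
        nlinarith [norm_nonneg (LinearMap.toContinuousLinearMap (Matrix.toEuclideanLin B)),
          l2_nonneg v]

lemma specNorm_nonneg {m n : ℕ} (B : Matrix (Fin m) (Fin n) ℝ) : 0 ≤ specNorm B :=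
  Real.sSup_nonneg (by rintro c ⟨v, hv, rfl⟩; exact l2_nonneg _)

lemma l2_mulVec_le {m n : ℕ} (B : Matrix (Fin m) (Fin n) ℝ) (v : Fin n → ℝ) :
    l2 (B.mulVec v) ≤ specNorm B * l2 v := by
  rcases eq_or_lt_of_le (l2_nonneg v) with h0 | h0
  · rw [l2_eq_zero h0.symm]
    simp [Matrix.mulVec_zero, l2, specNorm]
  · set w := (l2 v)⁻¹ • v with hw
    have hlw : l2 w = 1 := by
      rw [hw, l2_smul, abs_of_pos (inv_pos.mpr h0), inv_mul_cancel₀ h0.ne']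
    have hmem : l2 (B.mulVec w) ∈ {c | ∃ v : Fin n → ℝ, l2 v ≤ 1 ∧ c = l2 (B.mulVec v)} :=
      ⟨w, hlw.le, rfl⟩
    have hle : l2 (B.mulVec w) ≤ specNorm B := le_csSup (specNorm_bddAbove B) hmem
    have hBw : B.mulVec w = (l2 v)⁻¹ • B.mulVec v := by
      rw [hw]; ext i; simp [Matrix.mulVec_smul]
    rw [hBw, l2_smul, abs_of_pos (inv_pos.mpr h0)] at hle
    calc l2 (B.mulVec v) = l2 v * ((l2 v)⁻¹ * l2 (B.mulVec v)) := by
          field_simp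
      _ ≤ l2 v * specNorm B := by
          exact mul_le_mul_of_nonneg_left hle h0.le
      _ = specNorm B * l2 v := mul_comm _ _
def maskVec {n : ℕ} (S : Finset (Fin n)) (v : Fin n → ℝ) : Fin n → ℝ :=
  fun j => if j ∈ S then v j else 0

lemma colRestrict_mulVec {m n : ℕ} (B : Matrix (Fin m) (Fin n) ℝ) (S : Finset (Fin n))
    (v : Fin n → ℝ) : (colRestrict B S).mulVec v = B.mulVec (maskVec S v) := by
  funext i
  simp only [Matrix.mulVec, dotProduct, colRestrict, maskVec]
  refine Finset.sum_congr rfl fun j _ => ?_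
  split <;> simp

lemma maskVec_of_supp {n : ℕ} {S : Finset (Fin n)} {v : Fin n → ℝ}
    (h : ∀ i ∉ S, v i = 0) : maskVec S v = v := by
  funext j
  simp only [maskVec]
  split
  · rfl
  · exact (h j (by assumption)).symm

lemma l2_maskVec_le {n : ℕ} (S : Finset (Fin n)) (v : Fin n → ℝ) :
    l2 (maskVec S v) ≤ l2 v := by
  apply Real.sqrt_le_sqrt
  refine Finset.sum_le_sum fun j _ => ?_
  simp only [maskVec]
  split
  · exact le_rfl
  · simpa using sq_nonneg (v j)

lemma maskVec_sparse {n K : ℕ} (S : Finset (Fin n)) (hS : S.card ≤ K) (v : Fin n → ℝ) :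
    IsSparse K (maskVec S v) :=
  ⟨S, hS, fun i hi => by simp [maskVec, hi]⟩

lemma subNorm_bddAbove {m n : ℕ} (B : Matrix (Fin m) (Fin n) ℝ) (K : ℕ) :
    BddAbove {c | ∃ S : Finset (Fin n), S.card = K ∧ c = specNorm (colRestrict B S)} := by
  have : {c | ∃ S : Finset (Fin n), S.card = K ∧ c = specNorm (colRestrict B S)} =
      (fun S => specNorm (colRestrict B S)) '' {S : Finset (Fin n) | S.card = K} := by
    ext c
    constructor
    · rintro ⟨S, hS, rfl⟩; exact ⟨S, hS, rfl⟩
    · rintro ⟨S, hS, rfl⟩; exact ⟨S, hS, rfl⟩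
  rw [this]
  exact Set.Finite.bddAbove ((Set.toFinite _).image _)

lemma subNorm_nonneg {m n : ℕ} (B : Matrix (Fin m) (Fin n) ℝ) (K : ℕ) : 0 ≤ subNorm B K :=
  Real.sSup_nonneg (by rintro c ⟨S, hS, rfl⟩; exact specNorm_nonneg _)

lemma specNorm_le_subNorm {m n : ℕ} (B : Matrix (Fin m) (Fin n) ℝ) {K : ℕ}
    {S : Finset (Fin n)} (hS : S.card = K) :
    specNorm (colRestrict B S) ≤ subNorm B K :=
  le_csSup (subNorm_bddAbove B K) ⟨S, hS, rfl⟩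

lemma l2_mulVec_sparse_le {m n K : ℕ} (B : Matrix (Fin m) (Fin n) ℝ) (hK : K ≤ n)
    {v : Fin n → ℝ} (hv : IsSparse K v) : l2 (B.mulVec v) ≤ subNorm B K * l2 v := by
  obtain ⟨S, hcard, hsupp⟩ := hv
  obtain ⟨T, hST, hT⟩ := Finset.exists_superset_card_eq hcard (by simpa using hK)
  have hsuppT : ∀ i ∉ T, v i = 0 := fun i hi => hsupp i (fun hiS => hi (hST hiS))
  have : B.mulVec v = (colRestrict B T).mulVec v := by
    rw [colRestrict_mulVec, maskVec_of_supp hsuppT]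
  rw [this]
  calc l2 ((colRestrict B T).mulVec v) ≤ specNorm (colRestrict B T) * l2 v :=
        l2_mulVec_le _ _
    _ ≤ subNorm B K * l2 v :=
        mul_le_mul_of_nonneg_right (specNorm_le_subNorm B hT) (l2_nonneg v)

lemma subNorm_le_sqrt {m n : ℕ} {A : Matrix (Fin m) (Fin n) ℝ} {K : ℕ} {δ : ℝ}
    (hδ : 0 ≤ δ) (h : SatisfiesRIP A K δ) : subNorm A K ≤ Real.sqrt (1 + δ) := by
  refine Real.sSup_le ?_ (Real.sqrt_nonneg _)
  rintro c ⟨S, hS, rfl⟩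
  refine Real.sSup_le ?_ (Real.sqrt_nonneg _)
  rintro c ⟨v, hv, rfl⟩
  rw [colRestrict_mulVec]
  have hsp : IsSparse K (maskVec S v) := maskVec_sparse S hS.le v
  have h2 := (h _ hsp).2
  have hm : l2 (maskVec S v) ≤ 1 := (l2_maskVec_le S v).trans hv
  have ht2 : l2 (maskVec S v) ^ 2 ≤ 1 := by nlinarith [l2_nonneg (maskVec S v)]
  have hLn := l2_nonneg (A.mulVec (maskVec S v))
  rw [Real.le_sqrt hLn (by linarith)]
  nlinarith

lemma K_le_n {m n K : ℕ} {A : Matrix (Fin m) (Fin n) ℝ} (hA : 0 < subNorm A K) : K ≤ n := by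
  by_contra hn
  push_neg at hn
  have hemp : {c | ∃ S : Finset (Fin n), S.card = K ∧ c = specNorm (colRestrict A S)} = ∅ := by
    ext c
    simp only [Set.mem_setOf_eq, Set.mem_empty_iff_false, iff_false]
    rintro ⟨S, hS, -⟩
    have h1 : S.card ≤ n := by simpa using Finset.card_le_univ S
    omega
  rw [subNorm, hemp, Real.sSup_empty] at hA
  exact lt_irrefl 0 hA

/-- RIP of the perturbed matrix `A + E` with constant `(1+δ)(1+ε)² - 1`,
where `ε = ‖E‖₂^{(K)} / ‖A‖₂^{(K)}`. -/
theorem stmt2 {m n : ℕ} (A E : Matrix (Fin m) (Fin n) ℝ) (K : ℕ) (δ : ℝ) (hδ : 0 ≤ δ)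
    (h : SatisfiesRIP A K δ) (hA : 0 < subNorm A K) :
    SatisfiesRIP (A + E) K ((1 + δ) * (1 + subNorm E K / subNorm A K) ^ 2 - 1) := by
  have hKn : K ≤ n := K_le_n hA
  intro v hv
  set ε := subNorm E K / subNorm A K with hε
  have hε0 : 0 ≤ ε := div_nonneg (subNorm_nonneg E K) hA.le
  set s := Real.sqrt (1 + δ) with hs
  have hs0 : 0 ≤ s := Real.sqrt_nonneg _
  have hs2 : s ^ 2 = 1 + δ := Real.sq_sqrt (by linarith)
  set t := l2 v with htdef
  have ht0 : 0 ≤ t := l2_nonneg v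
  set a := l2 (A.mulVec v) with hadef
  have ha0 : 0 ≤ a := l2_nonneg _
  set e2 := l2 (E.mulVec v) with he2def
  have he0 : 0 ≤ e2 := l2_nonneg _
  have hEb : e2 ≤ ε * s * t := by
    have h1 : e2 ≤ subNorm E K * t := l2_mulVec_sparse_le E hKn hv
    have h2 : ε * subNorm A K = subNorm E K := div_mul_cancel₀ _ hA.ne'
    have h3 : subNorm A K ≤ s := subNorm_le_sqrt hδ h
    have h4 : subNorm E K * t ≤ ε * s * t := by
      rw [← h2]
      exact mul_le_mul_of_nonneg_right (mul_le_mul_of_nonneg_left h3 hε0) ht0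
    linarith
  have hAub : a ≤ s * t := by
    have h2 := (h v hv).2
    nlinarith [mul_nonneg hs0 ht0]
  have hAlb : (1 - δ) * t ^ 2 ≤ a ^ 2 := (h v hv).1
  have hadd : (A + E).mulVec v = A.mulVec v + E.mulVec v := Matrix.add_mulVec _ _ _
  set L := l2 ((A + E).mulVec v) with hLdef
  have hL0 : 0 ≤ L := l2_nonneg _
  have htri : L ≤ a + e2 := by
    rw [hLdef, hadd]
    exact l2_add_le _ _
  have htri2 : a ≤ L + e2 := by
    have hAv : A.mulVec v = (A + E).mulVec v + -(E.mulVec v) := by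
      rw [hadd]; abel
    calc a = l2 ((A + E).mulVec v + -(E.mulVec v)) := by rw [hadef, hAv]
      _ ≤ L + l2 (-(E.mulVec v)) := l2_add_le _ _
      _ = L + e2 := by rw [l2_neg]
  clear_value ε s t a e2 L
  clear h hv hadd hε hs htdef hadef he2def hLdef hA hKn
  have hεδt : 0 ≤ ε * ((1 + δ) * t ^ 2) :=
    mul_nonneg hε0 (mul_nonneg (by linarith) (sq_nonneg t))
  have hε2δt : 0 ≤ ε ^ 2 * ((1 + δ) * t ^ 2) :=
    mul_nonneg (sq_nonneg ε) (mul_nonneg (by linarith) (sq_nonneg t))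
  constructor
  · rcases le_or_gt e2 a with hc | hc
    · have hLsq : (a - e2) ^ 2 ≤ L ^ 2 := by nlinarith
      have hae : a * e2 ≤ ε * (1 + δ) * t ^ 2 := by
        calc a * e2 ≤ (s * t) * (ε * s * t) :=
              mul_le_mul hAub hEb he0 (mul_nonneg hs0 ht0)
          _ = ε * s ^ 2 * t ^ 2 := by ring
          _ = ε * (1 + δ) * t ^ 2 := by rw [hs2]
      nlinarith [sq_nonneg e2]
    · have he2sq : e2 ^ 2 ≤ ε ^ 2 * (1 + δ) * t ^ 2 := by
        calc e2 ^ 2 ≤ (ε * s * t) ^ 2 := by nlinarith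
          _ = ε ^ 2 * s ^ 2 * t ^ 2 := by ring
          _ = ε ^ 2 * (1 + δ) * t ^ 2 := by rw [hs2]
      have hasq : a ^ 2 ≤ e2 ^ 2 := by nlinarith
      nlinarith [sq_nonneg L]
  · have hLub : L ≤ s * t + ε * s * t := by linarith
    have hL2 : L ^ 2 ≤ (s * t + ε * s * t) ^ 2 := by
      nlinarith [add_nonneg (mul_nonneg hs0 ht0) (mul_nonneg (mul_nonneg hε0 hs0) ht0)]
    have heq : (s * t + ε * s * t) ^ 2 = (1 + δ) * (1 + ε) ^ 2 * t ^ 2 := by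
      have : (s * t + ε * s * t) ^ 2 = s ^ 2 * (1 + ε) ^ 2 * t ^ 2 := by ring
      rw [this, hs2]
    nlinarith
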